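/- For all natural numbers n, m with m ≥ 1: n^m = Σ_{k=1}^{m} A(m, k-1) · C(n+m-k, m), where A denotes the Eulerian numbers. -/
import Mathlib

open Polynomial Finset

/-- The Eulerian number A(m,k), via the explicit formula. -/
def eulerian (m k : ℕ) : ℤ :=
  ∑ i ∈ Finset.range (k + 1), (-1) ^ i * (Nat.choose (m + 1) i) * ((k + 1 - i : ℕ) : ℤ) ^ m



lemma fd : ∀ (N : ℕ) (p : Polynomial ℤ), p.degree < (N : ℕ) →
    ∑ i ∈ Finset.range (N + 1), (-1 : ℤ) ^ i * (Nat.choose N i : ℤ) * p.eval (i : ℤ) = 0 := by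
  intro N
  induction N with
  | zero =>
    intro p hp
    have hp0 : p = 0 := by
      by_contra h
      exact absurd hp (not_lt.mpr (by simpa using Polynomial.zero_le_degree_iff.mpr h))
    simp [hp0]
  | succ N ih =>
    intro p hp
    set q : Polynomial ℤ := p - p.comp (Polynomial.X + Polynomial.C 1) with hq
    have hqeval : ∀ i : ℕ, q.eval (i : ℤ) = p.eval (i : ℤ) - p.eval ((i : ℤ) + 1) := by
      intro i; simp [hq, Polynomial.eval_comp]
    have hqdeg : q.degree < (N : ℕ) := by
      rcases eq_or_ne p.natDegree 0 with h0 | h0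
      · have hz : q = 0 := by
          obtain ⟨c, rfl⟩ := Polynomial.natDegree_eq_zero.mp h0
          simp [hq]
        rw [hz, Polynomial.degree_zero]
        exact bot_lt_iff_ne_bot.mpr (by simp)
      · have hpne : p ≠ 0 := fun h => h0 (by simp [h])
        have hX : (Polynomial.X + Polynomial.C (1:ℤ)).natDegree = 1 := Polynomial.natDegree_X_add_C 1
        have hlc : (p.comp (X + C 1)).leadingCoeff = p.leadingCoeff := by
          rw [Polynomial.leadingCoeff_comp (by rw [hX]; exact one_ne_zero)]
          rw [Polynomial.leadingCoeff_X_add_C]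
          simp
        have hcompne : p.comp (X + C 1) ≠ 0 := by
          intro h
          apply hpne
          have h2 := hlc
          rw [h] at h2
          simpa [Polynomial.leadingCoeff_eq_zero] using h2.symm
        have hdeg : (p.comp (X + C 1)).degree = p.degree := by
          rw [Polynomial.degree_eq_natDegree hcompne, Polynomial.degree_eq_natDegree hpne,
            Polynomial.natDegree_comp, hX, mul_one]
        have hlt := Polynomial.degree_sub_lt hdeg.symm hpne hlc.symm
        have hle : p.degree ≤ (N : ℕ) := by
          rw [Polynomial.degree_eq_natDegree hpne] at hp ⊢
          exact_mod_cast Nat.lt_succ_iff.mp (by exact_mod_cast hp)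
        exact lt_of_lt_of_le hlt hle
    have hsum := ih q hqdeg
    rw [Finset.sum_range_succ']
    have hA : (∑ i ∈ Finset.range (N + 1), (-1 : ℤ) ^ (i + 1) * (Nat.choose N (i + 1) : ℤ) *
        p.eval ((i + 1 : ℕ) : ℤ)) + p.eval 0
        = ∑ i ∈ Finset.range (N + 1), (-1 : ℤ) ^ i * (Nat.choose N i : ℤ) * p.eval (i : ℤ) := by
      have h1 := Finset.sum_range_succ'
        (fun i => (-1 : ℤ) ^ i * (Nat.choose N i : ℤ) * p.eval (i : ℤ)) (N + 1)
      have h2 := Finset.sum_range_succ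
        (fun i => (-1 : ℤ) ^ i * (Nat.choose N i : ℤ) * p.eval (i : ℤ)) (N + 1)
      simp only [Nat.choose_succ_self, Nat.cast_zero, mul_zero, zero_mul, add_zero, pow_zero,
        Nat.choose_zero_right, Nat.cast_one, one_mul] at h1 h2
      linarith [h1, h2]
    have e1 : ∀ i ∈ Finset.range (N + 1),
        (-1 : ℤ) ^ (i + 1) * (Nat.choose (N + 1) (i + 1) : ℤ) * p.eval ((i + 1 : ℕ) : ℤ)
        = (-1 : ℤ) ^ (i + 1) * (Nat.choose N i : ℤ) * p.eval ((i + 1 : ℕ) : ℤ)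
          + (-1 : ℤ) ^ (i + 1) * (Nat.choose N (i + 1) : ℤ) * p.eval ((i + 1 : ℕ) : ℤ) := by
      intro i _
      rw [Nat.choose_succ_succ]
      push_cast
      ring
    rw [Finset.sum_congr rfl e1, Finset.sum_add_distrib, add_assoc]
    simp only [pow_zero, Nat.choose_zero_right, Nat.cast_one, one_mul, Nat.cast_zero]
    rw [hA]
    have e2 : ∀ i ∈ Finset.range (N + 1),
        (-1 : ℤ) ^ (i + 1) * (Nat.choose N i : ℤ) * p.eval ((i + 1 : ℕ) : ℤ)
          + (-1 : ℤ) ^ i * (Nat.choose N i : ℤ) * p.eval (i : ℤ)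
        = (-1 : ℤ) ^ i * (Nat.choose N i : ℤ) * q.eval (i : ℤ) := by
      intro i _
      rw [hqeval i]
      push_cast
      ring
    rw [← Finset.sum_add_distrib, Finset.sum_congr rfl e2]
    exact hsum





lemma alt_sum_pow (N m : ℕ) (h : m < N) :
    ∑ i ∈ Finset.range (N + 1), (-1 : ℤ) ^ i * (Nat.choose N i : ℤ) * (i : ℤ) ^ m = 0 := by
  have hdeg : (Polynomial.X ^ m : Polynomial ℤ).degree < (N : ℕ) := by
    rw [Polynomial.degree_X_pow]
    exact_mod_cast h
  simpa using fd N (Polynomial.X ^ m) hdeg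

lemma eulerian_zero (m : ℕ) : eulerian m 0 = 1 := by
  simp [eulerian]

lemma eulerian_self {m : ℕ} (hm : 1 ≤ m) : eulerian m m = 0 := by
  set f : ℕ → ℤ := fun j => (-1) ^ j * (Nat.choose (m + 1) j : ℤ) * ((m + 1 - j : ℕ) : ℤ) ^ m
    with hf
  have h1 : eulerian m m = ∑ i ∈ Finset.range (m + 1), f i := rfl
  have h2 : ∑ i ∈ Finset.range (m + 2), f i = ∑ i ∈ Finset.range (m + 1), f i := by
    rw [Finset.sum_range_succ]
    have : f (m + 1) = 0 := by
      simp [hf, zero_pow (by omega : m ≠ 0)]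
    rw [this, add_zero]
  have h3 := Finset.sum_range_reflect f (m + 2)
  have h4 : ∀ j ∈ Finset.range (m + 2), f (m + 2 - 1 - j)
      = (-1 : ℤ) ^ (m + 1) * ((-1) ^ j * (Nat.choose (m + 1) j : ℤ) * (j : ℤ) ^ m) := by
    intro j hj
    have hj' : j ≤ m + 1 := by simpa [Nat.lt_succ_iff] using hj
    have e0 : m + 2 - 1 - j = m + 1 - j := by omega
    have e1 : Nat.choose (m + 1) (m + 1 - j) = Nat.choose (m + 1) j := Nat.choose_symm hj'
    have e2 : m + 1 - (m + 1 - j) = j := by omega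
    have e3 : (-1 : ℤ) ^ (m + 1 - j) = (-1) ^ (m + 1) * (-1) ^ j := by
      have hadd : (-1 : ℤ) ^ (m + 1 - j) * (-1) ^ j = (-1) ^ (m + 1) := by
        rw [← pow_add]
        congr 1
        omega
      have hsq : (-1 : ℤ) ^ j * (-1) ^ j = 1 := by
        rw [← pow_add, ← two_mul, pow_mul]
        norm_num
      calc (-1 : ℤ) ^ (m + 1 - j) = (-1) ^ (m + 1 - j) * ((-1) ^ j * (-1) ^ j) := by
            rw [hsq, mul_one]
        _ = ((-1) ^ (m + 1 - j) * (-1) ^ j) * (-1) ^ j := by ring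
        _ = (-1) ^ (m + 1) * (-1) ^ j := by rw [hadd]
    simp only [hf, e0, e1, e2, e3]
    ring
  have h5 : eulerian m m = (-1 : ℤ) ^ (m + 1) *
      ∑ j ∈ Finset.range (m + 2), (-1) ^ j * (Nat.choose (m + 1) j : ℤ) * (j : ℤ) ^ m := by
    rw [h1, ← h2, ← h3, Finset.sum_congr rfl h4, ← Finset.mul_sum]
  rw [h5, alt_sum_pow (m + 1) m (Nat.lt_succ_self m), mul_zero]



lemma key_nat (x k m : ℕ) (h : k ≤ m) :
    x * Nat.choose (x + k) m
      = (k + 1) * Nat.choose (x + k) (m + 1) + (m - k) * Nat.choose (x + k + 1) (m + 1) := by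
  set t := x + k with ht
  rw [Nat.choose_succ_succ t m]
  rcases Nat.lt_or_ge t m with hlt | hge
  · rw [Nat.choose_eq_zero_of_lt hlt, Nat.choose_eq_zero_of_lt (by omega : t < m + 1)]
    simp
  · have hc : Nat.choose t (m + 1) * (m + 1) = Nat.choose t m * (t - m) :=
      Nat.choose_succ_right_eq t m
    have hcoef : (k + 1) + (m - k) = m + 1 := by omega
    have hx : (t - m) + (m - k) = x := by omega
    calc x * Nat.choose t m = ((t - m) + (m - k)) * Nat.choose t m := by rw [hx]
      _ = Nat.choose t m * (t - m) + (m - k) * Nat.choose t m := by ring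
      _ = Nat.choose t (m + 1) * (m + 1) + (m - k) * Nat.choose t m := by rw [hc]
      _ = (k + 1) * Nat.choose t (m + 1) + (m - k) * (Nat.choose t m + Nat.choose t (m + 1)) := by
          rw [← hcoef]; ring




lemma h3nat (m i : ℕ) (h : i ≤ m) :
    (m - i) * Nat.choose (m + 1) (i + 1) = (m + 1) * Nat.choose m (i + 1) := by
  rw [Nat.choose_succ_succ m i]
  have hc := Nat.choose_succ_right_eq m i
  have hcoef : (i + 1) + (m - i) = m + 1 := by omega
  calc (m - i) * (Nat.choose m i + Nat.choose m (i + 1))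
      = Nat.choose m i * (m - i) + (m - i) * Nat.choose m (i + 1) := by ring
    _ = Nat.choose m (i + 1) * (i + 1) + (m - i) * Nat.choose m (i + 1) := by rw [hc]
    _ = ((i + 1) + (m - i)) * Nat.choose m (i + 1) := by ring
    _ = (m + 1) * Nat.choose m (i + 1) := by rw [hcoef]

lemma eulerian_rec (m l : ℕ) (hm : 1 ≤ m) (hl : l + 1 ≤ m) :
    eulerian (m + 1) (l + 1)
      = ((l : ℤ) + 2) * eulerian m (l + 1) + ((m - l : ℕ) : ℤ) * eulerian m l := by
  set T : ℕ → ℤ := fun i =>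
    (-1) ^ i * (Nat.choose (m + 1 + 1) i : ℤ) * ((l + 1 + 1 - i : ℕ) : ℤ) ^ (m + 1)
    - ((l : ℤ) + 2) * ((-1) ^ i * (Nat.choose (m + 1) i : ℤ) * ((l + 1 + 1 - i : ℕ) : ℤ) ^ m)
    - ((m - l : ℕ) : ℤ) * ((-1) ^ i * (Nat.choose (m + 1) i : ℤ) * ((l + 1 - i : ℕ) : ℤ) ^ m)
    with hT
  set H : ℕ → ℤ := fun i =>
    (-1) ^ i * ((Nat.choose (m + 1) i : ℤ) * ((l + 1 - i : ℕ) : ℤ) ^ (m + 1)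
      - ((m : ℤ) + 1) * (Nat.choose m i : ℤ) * ((l + 1 - i : ℕ) : ℤ) ^ m) with hH
  have hE2 : eulerian m l = ∑ i ∈ Finset.range (l + 1 + 1),
      (-1) ^ i * (Nat.choose (m + 1) i : ℤ) * ((l + 1 - i : ℕ) : ℤ) ^ m := by
    rw [eulerian, Finset.sum_range_succ
      (fun i => (-1 : ℤ) ^ i * (Nat.choose (m + 1) i : ℤ) * ((l + 1 - i : ℕ) : ℤ) ^ m) (l + 1)]
    rw [Nat.sub_self, Nat.cast_zero, zero_pow (by omega : m ≠ 0), mul_zero, add_zero]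
  have hsplit : ∑ i ∈ Finset.range (l + 1 + 1), T i
      = eulerian (m + 1) (l + 1) - ((l : ℤ) + 2) * eulerian m (l + 1)
        - ((m - l : ℕ) : ℤ) * eulerian m l := by
    rw [hE2, eulerian, eulerian, Finset.mul_sum, Finset.mul_sum, ← Finset.sum_sub_distrib,
      ← Finset.sum_sub_distrib]
  have hTH : ∀ i ∈ Finset.range (l + 1), T (i + 1) = H (i + 1) - H i := by
    intro i hi
    have hil : i ≤ l := by simpa [Nat.lt_succ_iff] using hi
    have ca : ((l + 1 + 1 - (i + 1) : ℕ) : ℤ) = (l : ℤ) + 1 - i := by omega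
    have cb : ((l + 1 - (i + 1) : ℕ) : ℤ) = (l : ℤ) - i := by omega
    have cc : ((l + 1 - i : ℕ) : ℤ) = (l : ℤ) + 1 - i := by omega
    have cd : ((m - l : ℕ) : ℤ) = (m : ℤ) - l := by omega
    have h1 : (Nat.choose (m + 1 + 1) (i + 1) : ℤ)
        = (Nat.choose (m + 1) i : ℤ) + (Nat.choose (m + 1) (i + 1) : ℤ) := by
      exact_mod_cast Nat.choose_succ_succ (m + 1) i
    have h2 : ((m : ℤ) + 1) * (Nat.choose m i : ℤ)
        = (Nat.choose (m + 1) (i + 1) : ℤ) * ((i : ℤ) + 1) := by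
      exact_mod_cast Nat.add_one_mul_choose_eq m i
    have h3 : ((m : ℤ) - i) * (Nat.choose (m + 1) (i + 1) : ℤ)
        = ((m : ℤ) + 1) * (Nat.choose m (i + 1) : ℤ) := by
      have hn := congrArg (Nat.cast : ℕ → ℤ) (h3nat m i (by omega))
      push_cast [Nat.cast_sub (by omega : i ≤ m)] at hn
      linarith [hn]
    simp only [hT, hH, ca, cb, cc, cd]
    linear_combination (-((-1 : ℤ) ^ i) * ((l : ℤ) + 1 - i) ^ (m + 1)) * h1
      + (-((-1 : ℤ) ^ i) * ((l : ℤ) + 1 - i) ^ m) * h2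
      + (((-1 : ℤ) ^ i) * ((l : ℤ) - i) ^ m) * h3
  have hT0 : T 0 = H 0 := by
    have cd : ((m - l : ℕ) : ℤ) = (m : ℤ) - l := by omega
    simp only [hT, hH, Nat.sub_zero, Nat.choose_zero_right, pow_zero, cd]
    push_cast
    ring
  have hHend : H (l + 1) = 0 := by
    simp only [hH, Nat.sub_self, Nat.cast_zero]
    rw [zero_pow (by omega : m + 1 ≠ 0), zero_pow (by omega : m ≠ 0)]
    ring
  have hsum : ∑ i ∈ Finset.range (l + 1 + 1), T i = 0 := by
    rw [Finset.sum_range_succ', Finset.sum_congr rfl hTH, Finset.sum_range_sub H (l + 1), hT0,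
      hHend]
    ring
  rw [hsum] at hsplit
  linarith [hsplit]





lemma worp (m : ℕ) (hm : 1 ≤ m) : ∀ n : ℕ,
    ((n : ℤ)) ^ m = ∑ j ∈ Finset.range m, eulerian m j * (Nat.choose (n + m - 1 - j) m : ℤ) := by
  induction m, hm using Nat.le_induction with
  | base =>
    intro n
    have h0 : n + 1 - 1 - 0 = n := by omega
    simp [eulerian, h0, Nat.choose_one_right]
  | succ m hm ih =>
    intro n
    obtain ⟨m', rfl⟩ : ∃ m', m = m' + 1 := ⟨m - 1, by omega⟩
    set m := m' + 1 with hmdef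
    -- abbreviations
    set c : ℕ → ℤ := fun j => (Nat.choose (n + m - 1 - j) (m + 1) : ℤ) with hc
    -- RHS reshaping
    have hR : ∑ j ∈ Finset.range (m + 1),
        eulerian (m + 1) j * (Nat.choose (n + (m + 1) - 1 - j) (m + 1) : ℤ)
        = (Nat.choose (n + m) (m + 1) : ℤ)
          + ∑ j ∈ Finset.range m, eulerian (m + 1) (j + 1) * c j := by
      rw [Finset.sum_range_succ'
        (fun j => eulerian (m + 1) j * (Nat.choose (n + (m + 1) - 1 - j) (m + 1) : ℤ)) m]
      have h0 : n + (m + 1) - 1 - 0 = n + m := by omega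
      rw [h0, eulerian_zero, one_mul, add_comm]
      congr 1
      apply Finset.sum_congr rfl
      intro j hj
      have h1 : n + (m + 1) - 1 - (j + 1) = n + m - 1 - j := by omega
      rw [h1]
    -- apply recurrence
    have hR2 : ∑ j ∈ Finset.range m, eulerian (m + 1) (j + 1) * c j
        = ∑ j ∈ Finset.range m, (((j : ℤ) + 2) * eulerian m (j + 1) * c j
            + ((m - j : ℕ) : ℤ) * eulerian m j * c j) := by
      apply Finset.sum_congr rfl
      intro j hj
      have hjm : j + 1 ≤ m := by have := Finset.mem_range.mp hj; omega
      rw [eulerian_rec m j (by omega) hjm]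
      ring
    -- LHS reshaping via key_nat
    have hL : (n : ℤ) ^ (m + 1)
        = ∑ j ∈ Finset.range m, (((m - j : ℕ) : ℤ) * eulerian m j * c j
            + ((j : ℤ) + 1) * eulerian m j * (Nat.choose (n + m - j) (m + 1) : ℤ)) := by
      rw [pow_succ, ih n, Finset.sum_mul]
      apply Finset.sum_congr rfl
      intro j hj
      have hjm : j < m := Finset.mem_range.mp hj
      have hkey := key_nat n (m - 1 - j) m (by omega)
      have e1 : n + (m - 1 - j) = n + m - 1 - j := by omega
      have e2 : m - 1 - j + 1 = m - j := by omega
      have e3 : m - (m - 1 - j) = j + 1 := by omega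
      have e4 : n + m - 1 - j + 1 = n + m - j := by omega
      rw [e1, e2, e3, e4] at hkey
      have hkey' := congrArg (Nat.cast : ℕ → ℤ) hkey
      push_cast at hkey'
      simp only [hc]
      linear_combination eulerian m j * hkey'
    -- the shifted-sum identity
    have hshift : ∑ j ∈ Finset.range m, ((j : ℤ) + 1) * eulerian m j *
          (Nat.choose (n + m - j) (m + 1) : ℤ)
        = (Nat.choose (n + m) (m + 1) : ℤ)
          + ∑ j ∈ Finset.range m, ((j : ℤ) + 2) * eulerian m (j + 1) * c j := by
      have hlast : ((m' : ℤ) + 2) * eulerian m (m' + 1) * c m' = 0 := by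
        rw [show eulerian m (m' + 1) = 0 from eulerian_self (by omega)]
        ring
      have hterm : ∀ j ∈ Finset.range m',
          ((j + 1 : ℕ) : ℤ) * eulerian m (j + 1) * (Nat.choose (n + m - (j + 1)) (m + 1) : ℤ)
            + 1 * eulerian m (j + 1) * (Nat.choose (n + m - (j + 1)) (m + 1) : ℤ)
          = ((j : ℤ) + 2) * eulerian m (j + 1) * c j := by
        intro j hj
        have h1 : n + m - (j + 1) = n + m - 1 - j := by omega
        rw [h1]
        simp only [hc]
        push_cast
        ring
      have h0 : n + m - 0 = n + m := by omega
      have hg0 : ((0 : ℕ) : ℤ) * eulerian m 0 * (Nat.choose (n + m - 0) (m + 1) : ℤ)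
          + 1 * eulerian m 0 * (Nat.choose (n + m - 0) (m + 1) : ℤ)
          = (Nat.choose (n + m) (m + 1) : ℤ) := by
        rw [h0, eulerian_zero]
        push_cast
        ring
      have e : ∀ j : ℕ, ((j : ℤ) + 1) * eulerian m j * (Nat.choose (n + m - j) (m + 1) : ℤ)
          = ((j : ℕ) : ℤ) * eulerian m j * (Nat.choose (n + m - j) (m + 1) : ℤ)
            + 1 * eulerian m j * (Nat.choose (n + m - j) (m + 1) : ℤ) := by
        intro j; ring
      calc ∑ j ∈ Finset.range m, ((j : ℤ) + 1) * eulerian m j *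
            (Nat.choose (n + m - j) (m + 1) : ℤ)
          = ∑ j ∈ Finset.range m, (((j : ℕ) : ℤ) * eulerian m j *
              (Nat.choose (n + m - j) (m + 1) : ℤ)
            + 1 * eulerian m j * (Nat.choose (n + m - j) (m + 1) : ℤ)) :=
            Finset.sum_congr rfl fun j _ => e j
        _ = ∑ j ∈ Finset.range m', (((j + 1 : ℕ) : ℤ) * eulerian m (j + 1) *
              (Nat.choose (n + m - (j + 1)) (m + 1) : ℤ)
            + 1 * eulerian m (j + 1) * (Nat.choose (n + m - (j + 1)) (m + 1) : ℤ))
            + (((0 : ℕ) : ℤ) * eulerian m 0 * (Nat.choose (n + m - 0) (m + 1) : ℤ)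
            + 1 * eulerian m 0 * (Nat.choose (n + m - 0) (m + 1) : ℤ)) :=
            Finset.sum_range_succ' _ m'
        _ = ∑ j ∈ Finset.range m', ((j : ℤ) + 2) * eulerian m (j + 1) * c j
            + (Nat.choose (n + m) (m + 1) : ℤ) := by
            rw [Finset.sum_congr rfl hterm, hg0]
        _ = (Nat.choose (n + m) (m + 1) : ℤ)
            + ∑ j ∈ Finset.range m, ((j : ℤ) + 2) * eulerian m (j + 1) * c j := by
            rw [Finset.sum_range_succ (fun j => ((j : ℤ) + 2) * eulerian m (j + 1) * c j) m',
              hlast, add_zero, add_comm]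
    rw [hR, hR2, hL]
    rw [Finset.sum_add_distrib, Finset.sum_add_distrib]
    linarith [hshift]

theorem worpitzky_reversed (n m : ℕ) (hm : 1 ≤ m) :
    (n : ℤ) ^ m = ∑ k ∈ Finset.Icc 1 m, eulerian m (k - 1) * (Nat.choose (n + m - k) m : ℤ) := by
  rw [worp m hm n, ← Finset.Ico_add_one_right_eq_Icc, Finset.sum_Ico_eq_sum_range]
  have hrange : m + 1 - 1 = m := by omega
  rw [hrange]
  apply Finset.sum_congr rfl
  intro j hj
  have h1 : 1 + j - 1 = j := by omega
  have h2 : n + m - (1 + j) = n + m - 1 - j := by omega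
  rw [h1, h2]
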